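/- Online distribution-shift bound (Q-type): Let f^1,…,f^T ∈ F, let λ > 0, and for each h define Σ_{t;h} = Σ_{τ=1}^t X_h(f^τ)·X_h(f^τ)ᵀ + λ·I_d (so Σ_{0;h} = λ·I_d). Then for every t ∈ {1,…,T} and every h ∈ {0,…,H−1}: |⟨W_h(f^t), X_h(f^t)⟩| ≤ sqrt( X_h(f^t)ᵀ Σ_{t−1;h}⁻¹ X_h(f^t) ) · sqrt( Σ_{i=1}^{t−1} Σ_{s,a} d^{π^{f^i}}_h(s,a)·( f^t_h(s,a) − (T_h f^t_{h+1})(s,a) )² + λ·B_W² ). -/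

import Mathlib

open Finset Matrix
open scoped Classical

/-- Max over the (finite, nonempty) action space. -/
noncomputable def supA {A : Type*} [Fintype A] [Nonempty A] (g : A → ℝ) : ℝ :=
  Finset.univ.sup' Finset.univ_nonempty g

/-- An action achieving the maximum of `g`. -/
noncomputable def argmaxA {A : Type*} [Fintype A] [Nonempty A] (g : A → ℝ) : A :=
  Classical.choose (Finset.exists_mem_eq_sup' (Finset.univ_nonempty (α := A)) g)

/-- Bellman optimality operator at step `h` applied to `g : S × A → ℝ`. -/
noncomputable def bellman {S A : Type*} [Fintype S] [Fintype A] [Nonempty A]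
    (P : ℕ → S → A → S → ℝ) (r : ℕ → S → A → ℝ) (h : ℕ)
    (g : S → A → ℝ) (s : S) (a : A) : ℝ :=
  r h s a + ∑ s', P h s a s' * supA (g s')

/-- Auxiliary value function, by recursion on the number of remaining steps. -/
noncomputable def Vaux {S A : Type*} [Fintype S] [Fintype A]
    (P : ℕ → S → A → S → ℝ) (r : ℕ → S → A → ℝ) (π : ℕ → S → A → ℝ) (H : ℕ) :
    ℕ → S → ℝ
  | 0, _ => 0
  | k + 1, s => ∑ a, π (H - (k + 1)) s a *
      (r (H - (k + 1)) s a + ∑ s', P (H - (k + 1)) s a s' * Vaux P r π H k s')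

/-- Value function `V^π_h(s)` of policy `π` (with `V^π_H ≡ 0`). -/
noncomputable def Vval {S A : Type*} [Fintype S] [Fintype A]
    (P : ℕ → S → A → S → ℝ) (r : ℕ → S → A → ℝ) (π : ℕ → S → A → ℝ)
    (H h : ℕ) (s : S) : ℝ :=
  Vaux P r π H (H - h) s

/-- Occupancy measure `d^π_h(s,a)`. -/
noncomputable def occ {S A : Type*} [Fintype S] [Fintype A]
    (P : ℕ → S → A → S → ℝ) (d0 : S → ℝ) (π : ℕ → S → A → ℝ) :
    ℕ → S → A → ℝ
  | 0, s, a => d0 s * π 0 s a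
  | h + 1, s', a' => (∑ s, ∑ a, occ P d0 π h s a * P h s a s') * π (h + 1) s' a'

/-- The deterministic greedy policy w.r.t. the tuple `f`. -/
noncomputable def greedy {S A : Type*} [Fintype A] [Nonempty A]
    (f : ℕ → S → A → ℝ) (h : ℕ) (s : S) (a : A) : ℝ :=
  if a = argmaxA (f h s) then 1 else 0

/- ### Auxiliary lemmas -/

lemma dot_vecMulVec {n : Type*} [Fintype n] (a b x y : n → ℝ) :
    x ⬝ᵥ (vecMulVec a b *ᵥ y) = (x ⬝ᵥ a) * (b ⬝ᵥ y) := by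
  calc x ⬝ᵥ (vecMulVec a b *ᵥ y) = ∑ i, ∑ j, (x i * a i) * (b j * y j) := by
        simp only [dotProduct, mulVec, vecMulVec_apply, Finset.mul_sum]
        exact Finset.sum_congr rfl fun i _ => Finset.sum_congr rfl fun j _ => by ring
    _ = (x ⬝ᵥ a) * (b ⬝ᵥ y) := by rw [← Finset.sum_mul_sum]; rfl

lemma dot_mulVec_symm {n : Type*} [Fintype n] {M : Matrix n n ℝ}
    (h : ∀ i j, M i j = M j i) (x y : n → ℝ) :
    x ⬝ᵥ (M *ᵥ y) = y ⬝ᵥ (M *ᵥ x) := by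
  simp only [dotProduct, mulVec, Finset.mul_sum]
  rw [Finset.sum_comm]
  exact Finset.sum_congr rfl fun i _ => Finset.sum_congr rfl fun j _ => by rw [h j i]; ring

lemma cs_psd {n : Type*} [Fintype n] {M : Matrix n n ℝ}
    (hsym : ∀ i j, M i j = M j i) (hpsd : ∀ v, 0 ≤ v ⬝ᵥ (M *ᵥ v)) (x y : n → ℝ) :
    (x ⬝ᵥ (M *ᵥ y)) ^ 2 ≤ (x ⬝ᵥ (M *ᵥ x)) * (y ⬝ᵥ (M *ᵥ y)) := by
  have key : ∀ t : ℝ, 0 ≤ (y ⬝ᵥ (M *ᵥ y)) * (t * t) + (2 * (x ⬝ᵥ (M *ᵥ y))) * t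
      + (x ⬝ᵥ (M *ᵥ x)) := by
    intro t
    have h0 := hpsd (x + t • y)
    have hs : y ⬝ᵥ (M *ᵥ x) = x ⬝ᵥ (M *ᵥ y) := dot_mulVec_symm hsym y x
    simp only [mulVec_add, mulVec_smul, dotProduct_add, add_dotProduct,
      dotProduct_smul, smul_dotProduct, smul_mulVec, smul_eq_mul, hs] at h0
    nlinarith [h0]
  have hd := discrim_le_zero key
  rw [discrim] at hd
  nlinarith [hd]

lemma jensen_sq {ι : Type*} (s : Finset ι) (p x : ι → ℝ)
    (hp : ∀ i ∈ s, 0 ≤ p i) (hps : ∑ i ∈ s, p i = 1) :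
    (∑ i ∈ s, p i * x i) ^ 2 ≤ ∑ i ∈ s, p i * x i ^ 2 := by
  have h := sum_mul_sq_le_sq_mul_sq s (fun i => Real.sqrt (p i))
    (fun i => Real.sqrt (p i) * x i)
  have e1 : ∑ i ∈ s, Real.sqrt (p i) * (Real.sqrt (p i) * x i) = ∑ i ∈ s, p i * x i :=
    Finset.sum_congr rfl fun i hi => by
      rw [← mul_assoc, Real.mul_self_sqrt (hp i hi)]
  have e2 : ∑ i ∈ s, Real.sqrt (p i) ^ 2 = (1 : ℝ) := by
    rw [← hps]; exact Finset.sum_congr rfl fun i hi => Real.sq_sqrt (hp i hi)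
  have e3 : ∑ i ∈ s, (Real.sqrt (p i) * x i) ^ 2 = ∑ i ∈ s, p i * x i ^ 2 :=
    Finset.sum_congr rfl fun i hi => by
      rw [mul_pow, Real.sq_sqrt (hp i hi)]
  rw [e1, e2, e3, one_mul] at h
  exact h

lemma sum_mulVec' {n ι : Type*} [Fintype n] (s : Finset ι) (A : ι → Matrix n n ℝ)
    (v : n → ℝ) : (∑ τ ∈ s, A τ) *ᵥ v = ∑ τ ∈ s, (A τ *ᵥ v) := by
  ext i
  simp only [mulVec, dotProduct, Matrix.sum_apply, Finset.sum_apply, Finset.sum_mul]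
  exact Finset.sum_comm

lemma dot_sum' {n ι : Type*} [Fintype n] (s : Finset ι) (x : n → ℝ) (f : ι → n → ℝ) :
    x ⬝ᵥ (∑ τ ∈ s, f τ) = ∑ τ ∈ s, x ⬝ᵥ f τ := by
  simp only [dotProduct, Finset.sum_apply, Finset.mul_sum]
  exact Finset.sum_comm

lemma greedy_nonneg {S A : Type*} [Fintype A] [Nonempty A]
    (f : ℕ → S → A → ℝ) (h : ℕ) (s : S) (a : A) : 0 ≤ greedy f h s a := by
  unfold greedy; split <;> norm_num

lemma greedy_sum {S A : Type*} [Fintype A] [Nonempty A]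
    (f : ℕ → S → A → ℝ) (h : ℕ) (s : S) : ∑ a, greedy f h s a = 1 := by
  simp [greedy]

lemma occ_nonneg {S A : Type*} [Fintype S] [Fintype A]
    (P : ℕ → S → A → S → ℝ) (d0 : S → ℝ) (π : ℕ → S → A → ℝ) (H : ℕ)
    (hP : ∀ h < H, ∀ s a s', 0 ≤ P h s a s') (hd0 : ∀ s, 0 ≤ d0 s)
    (hπ : ∀ h s a, 0 ≤ π h s a) :
    ∀ h < H, ∀ s a, 0 ≤ occ P d0 π h s a := by
  intro h
  induction h with
  | zero => exact fun _ s a => mul_nonneg (hd0 s) (hπ 0 s a)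
  | succ h ih =>
    intro hh s' a'
    have hhH : h < H := Nat.lt_of_succ_lt hh
    refine mul_nonneg (Finset.sum_nonneg fun s _ => Finset.sum_nonneg fun a _ =>
      mul_nonneg (ih hhH s a) (hP h hhH s a s')) (hπ _ s' a')

lemma occ_sum {S A : Type*} [Fintype S] [Fintype A]
    (P : ℕ → S → A → S → ℝ) (d0 : S → ℝ) (π : ℕ → S → A → ℝ) (H : ℕ)
    (hPsum : ∀ h < H, ∀ s a, ∑ s', P h s a s' = 1)
    (hd0sum : ∑ s, d0 s = 1)
    (hπsum : ∀ h s, ∑ a, π h s a = 1) :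
    ∀ h < H, ∑ s, ∑ a, occ P d0 π h s a = 1 := by
  intro h
  induction h with
  | zero =>
    intro _
    have : ∀ s, ∑ a, occ P d0 π 0 s a = d0 s := fun s => by
      show ∑ a, d0 s * π 0 s a = d0 s
      rw [← Finset.mul_sum, hπsum 0 s, mul_one]
    rw [Finset.sum_congr rfl fun s _ => this s, hd0sum]
  | succ h ih =>
    intro hh
    have hhH : h < H := Nat.lt_of_succ_lt hh
    have step : ∀ s', ∑ a', occ P d0 π (h + 1) s' a'
        = ∑ s, ∑ a, occ P d0 π h s a * P h s a s' := fun s' => by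
      show ∑ a', (∑ s, ∑ a, occ P d0 π h s a * P h s a s') * π (h + 1) s' a' = _
      rw [← Finset.mul_sum, hπsum (h + 1) s', mul_one]
    calc ∑ s', ∑ a', occ P d0 π (h + 1) s' a'
        = ∑ s', ∑ s, ∑ a, occ P d0 π h s a * P h s a s' :=
          Finset.sum_congr rfl fun s' _ => step s'
      _ = ∑ s, ∑ s', ∑ a, occ P d0 π h s a * P h s a s' := Finset.sum_comm
      _ = ∑ s, ∑ a, ∑ s', occ P d0 π h s a * P h s a s' :=
          Finset.sum_congr rfl fun s _ => Finset.sum_comm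
      _ = ∑ s, ∑ a, occ P d0 π h s a := by
          refine Finset.sum_congr rfl fun s _ => Finset.sum_congr rfl fun a _ => ?_
          rw [← Finset.mul_sum, hPsum h hhH s a, mul_one]
      _ = 1 := ih hhH

/-- **Online distribution-shift bound (Q-type bilinear model).** -/
theorem online_distribution_shift_Qtype
    {S A : Type*} [Fintype S] [Fintype A] [Nonempty S] [Nonempty A]
    (H : ℕ) (hH : 1 ≤ H)
    (P : ℕ → S → A → S → ℝ)
    (hPnn : ∀ h < H, ∀ s a s', 0 ≤ P h s a s')
    (hPsum : ∀ h < H, ∀ s a, ∑ s', P h s a s' = 1)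
    (r : ℕ → S → A → ℝ)
    (d0 : S → ℝ) (hd0nn : ∀ s, 0 ≤ d0 s) (hd0sum : ∑ s, d0 s = 1)
    (dd : ℕ) (Vmax BX BW : ℝ)
    (F : Set (ℕ → S → A → ℝ))
    (hFbdd : ∀ f ∈ F, ∀ h < H, ∀ s a, 0 ≤ f h s a ∧ f h s a ≤ Vmax)
    (hFH : ∀ f ∈ F, ∀ s a, f H s a = 0)
    (X W : ℕ → (ℕ → S → A → ℝ) → Fin dd → ℝ)
    (hX : ∀ f ∈ F, ∀ h < H, Real.sqrt (∑ i, X h f i ^ 2) ≤ BX)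
    (hW : ∀ f ∈ F, ∀ h < H, Real.sqrt (∑ i, W h f i ^ 2) ≤ BW)
    (hbil : ∀ f ∈ F, ∀ g ∈ F, ∀ h < H,
      |∑ s, ∑ a, occ P d0 (greedy f) h s a *
          (g h s a - bellman P r h (g (h + 1)) s a)|
        = |X h f ⬝ᵥ W h g|)
    (T : ℕ) (fseq : ℕ → (ℕ → S → A → ℝ))
    (hfseq : ∀ t ∈ Finset.Icc 1 T, fseq t ∈ F)
    (lam : ℝ) (hlam : 0 < lam) :
    ∀ t ∈ Finset.Icc 1 T, ∀ h < H,
      |W h (fseq t) ⬝ᵥ X h (fseq t)| ≤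
        Real.sqrt (X h (fseq t) ⬝ᵥ
            ((∑ τ ∈ Finset.Icc 1 (t - 1),
                Matrix.vecMulVec (X h (fseq τ)) (X h (fseq τ))) +
              lam • (1 : Matrix (Fin dd) (Fin dd) ℝ))⁻¹ *ᵥ X h (fseq t)) *
          Real.sqrt ((∑ i ∈ Finset.Icc 1 (t - 1), ∑ s, ∑ a,
              occ P d0 (greedy (fseq i)) h s a *
                (fseq t h s a - bellman P r h (fseq t (h + 1)) s a) ^ 2) +
            lam * BW ^ 2) := by
  intro t ht h hh
  obtain ⟨ht1, htT⟩ := Finset.mem_Icc.mp ht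
  set x := X h (fseq t) with hxdef
  set w := W h (fseq t) with hwdef
  set M : Matrix (Fin dd) (Fin dd) ℝ :=
    (∑ τ ∈ Finset.Icc 1 (t - 1), vecMulVec (X h (fseq τ)) (X h (fseq τ))) +
      lam • (1 : Matrix (Fin dd) (Fin dd) ℝ) with hM
  -- quadratic form of M
  have qform : ∀ v : Fin dd → ℝ, v ⬝ᵥ (M *ᵥ v)
      = (∑ τ ∈ Finset.Icc 1 (t - 1), (X h (fseq τ) ⬝ᵥ v) ^ 2) + lam * (v ⬝ᵥ v) := by
    intro v
    rw [hM, add_mulVec, dotProduct_add, sum_mulVec', dot_sum']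
    congr 1
    · refine Finset.sum_congr rfl fun τ _ => ?_
      rw [dot_vecMulVec, sq, dotProduct_comm v]
    · rw [smul_mulVec, one_mulVec, dotProduct_smul, smul_eq_mul]
  -- entrywise symmetry of M
  have hsym : ∀ i j, M i j = M j i := by
    intro i j
    simp only [hM, Matrix.add_apply, Matrix.sum_apply, vecMulVec_apply,
      Matrix.smul_apply, Matrix.one_apply, smul_eq_mul]
    congr 1
    · exact Finset.sum_congr rfl fun τ _ => mul_comm _ _
    · by_cases hij : i = j
      · subst hij; rfl
      · simp [hij, Ne.symm hij]
  have hpsd : ∀ v : Fin dd → ℝ, 0 ≤ v ⬝ᵥ (M *ᵥ v) := by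
    intro v
    rw [qform]
    refine add_nonneg (Finset.sum_nonneg fun τ _ => sq_nonneg _)
      (mul_nonneg hlam.le (Finset.sum_nonneg fun i _ => mul_self_nonneg _))
  -- M is positive definite
  have hposdef : M.PosDef := by
    rw [posDef_iff_dotProduct_mulVec]
    constructor
    · ext i j
      simp only [conjTranspose_apply, star_trivial]
      exact hsym j i
    · intro v hv
      simp only [star_trivial]
      rw [qform]
      obtain ⟨i, hi⟩ := Function.ne_iff.mp hv
      have hvv : 0 < v ⬝ᵥ v :=
        Finset.sum_pos' (fun j _ => mul_self_nonneg _)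
          ⟨i, Finset.mem_univ i, mul_self_pos.mpr hi⟩
      have := mul_pos hlam hvv
      have hsum : 0 ≤ ∑ τ ∈ Finset.Icc 1 (t - 1), (X h (fseq τ) ⬝ᵥ v) ^ 2 :=
        Finset.sum_nonneg fun τ _ => sq_nonneg _
      linarith
  have hdet : IsUnit M.det := isUnit_iff_ne_zero.mpr hposdef.det_pos.ne'
  have hMinvmul : M * M⁻¹ = 1 := Matrix.mul_nonsing_inv M hdet
  have hinvposdef : M⁻¹.PosDef := hposdef.inv
  -- nonnegativity of x M⁻¹ x
  have hxMx : 0 ≤ x ⬝ᵥ (M⁻¹ *ᵥ x) := by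
    have := hinvposdef.posSemidef.dotProduct_mulVec_nonneg x
    simpa only [star_trivial] using this
  set y : Fin dd → ℝ := M⁻¹ *ᵥ x with hy
  have hxy : M *ᵥ y = x := by
    rw [hy, Matrix.mulVec_mulVec, hMinvmul, Matrix.one_mulVec]
  have hyMy : y ⬝ᵥ (M *ᵥ y) = x ⬝ᵥ y := by
    rw [hxy, dotProduct_comm]
  -- Cauchy–Schwarz in the M-inner product
  have hcs : (w ⬝ᵥ x) ^ 2 ≤ (w ⬝ᵥ (M *ᵥ w)) * (x ⬝ᵥ y) := by
    have h0 := cs_psd hsym hpsd w y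
    rw [hyMy] at h0
    rwa [hxy] at h0
  -- bound on the M-norm of w
  have hqw : w ⬝ᵥ (M *ᵥ w) ≤ (∑ i ∈ Finset.Icc 1 (t - 1), ∑ s, ∑ a,
      occ P d0 (greedy (fseq i)) h s a *
        (fseq t h s a - bellman P r h (fseq t (h + 1)) s a) ^ 2) + lam * BW ^ 2 := by
    rw [qform]
    apply add_le_add
    · refine Finset.sum_le_sum fun τ hτ => ?_
      obtain ⟨hτ1, hτ2⟩ := Finset.mem_Icc.mp hτ
      have hτT : τ ∈ Finset.Icc 1 T :=
        Finset.mem_Icc.mpr ⟨hτ1, le_trans hτ2 (le_trans (Nat.sub_le t 1) htT)⟩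
      have hτF : fseq τ ∈ F := hfseq τ hτT
      have hb := hbil (fseq τ) hτF (fseq t) (hfseq t ht) h hh
      rw [← hwdef] at hb
      have hocc_nn := occ_nonneg P d0 (greedy (fseq τ)) H hPnn hd0nn
        (greedy_nonneg (fseq τ)) h hh
      have hocc_sum := occ_sum P d0 (greedy (fseq τ)) H hPsum hd0sum
        (greedy_sum (fseq τ)) h hh
      have heq : (X h (fseq τ) ⬝ᵥ w) ^ 2
          = (∑ s, ∑ a, occ P d0 (greedy (fseq τ)) h s a *
              (fseq t h s a - bellman P r h (fseq t (h + 1)) s a)) ^ 2 := by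
        rw [← sq_abs, ← sq_abs (∑ s, ∑ a, _), hb]
      rw [heq]
      rw [← Fintype.sum_prod_type
        (f := fun p : S × A => occ P d0 (greedy (fseq τ)) h p.1 p.2 *
          (fseq t h p.1 p.2 - bellman P r h (fseq t (h + 1)) p.1 p.2)),
        ← Fintype.sum_prod_type
        (f := fun p : S × A => occ P d0 (greedy (fseq τ)) h p.1 p.2 *
          (fseq t h p.1 p.2 - bellman P r h (fseq t (h + 1)) p.1 p.2) ^ 2)]
      refine jensen_sq Finset.univ
        (fun p : S × A => occ P d0 (greedy (fseq τ)) h p.1 p.2)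
        (fun p : S × A => fseq t h p.1 p.2 - bellman P r h (fseq t (h + 1)) p.1 p.2)
        (fun p _ => hocc_nn p.1 p.2) ?_
      rw [Fintype.sum_prod_type]
      exact hocc_sum
    · have hWb := hW (fseq t) (hfseq t ht) h hh
      rw [← hwdef] at hWb
      have hnn : 0 ≤ ∑ i, w i ^ 2 := Finset.sum_nonneg fun i _ => sq_nonneg _
      have h2 : ∑ i, w i ^ 2 ≤ BW ^ 2 := by
        calc ∑ i, w i ^ 2 = Real.sqrt (∑ i, w i ^ 2) ^ 2 := (Real.sq_sqrt hnn).symm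
          _ ≤ BW ^ 2 := pow_le_pow_left₀ (Real.sqrt_nonneg _) hWb 2
      have hww : w ⬝ᵥ w = ∑ i, w i ^ 2 := by
        simp [dotProduct, sq]
      rw [hww]
      exact mul_le_mul_of_nonneg_left h2 hlam.le
  -- combine
  have h1 : (w ⬝ᵥ x) ^ 2 ≤ (x ⬝ᵥ y) *
      ((∑ i ∈ Finset.Icc 1 (t - 1), ∑ s, ∑ a,
          occ P d0 (greedy (fseq i)) h s a *
            (fseq t h s a - bellman P r h (fseq t (h + 1)) s a) ^ 2) + lam * BW ^ 2) := by
    calc (w ⬝ᵥ x) ^ 2 ≤ (w ⬝ᵥ (M *ᵥ w)) * (x ⬝ᵥ y) := hcs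
      _ = (x ⬝ᵥ y) * (w ⬝ᵥ (M *ᵥ w)) := mul_comm _ _
      _ ≤ _ := mul_le_mul_of_nonneg_left hqw hxMx
  calc |w ⬝ᵥ x| = Real.sqrt ((w ⬝ᵥ x) ^ 2) := (Real.sqrt_sq_eq_abs _).symm
    _ ≤ Real.sqrt ((x ⬝ᵥ y) *
        ((∑ i ∈ Finset.Icc 1 (t - 1), ∑ s, ∑ a,
            occ P d0 (greedy (fseq i)) h s a *
              (fseq t h s a - bellman P r h (fseq t (h + 1)) s a) ^ 2) + lam * BW ^ 2)) :=
        Real.sqrt_le_sqrt h1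
    _ = _ := Real.sqrt_mul hxMx _
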